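/- If a compact Hausdorff space X is I-favorable, then the hyperspace exp(X) of nonempty closed subsets of X with the Vietoris topology is I-favorable. -/

import Mathlib

open Set TopologicalSpace

variable (X : Type*) [TopologicalSpace X]

/-- A valid move of Player I: a finite family of nonempty open sets. -/
def IMove (A : Set (Set X)) : Prop :=
  A.Finite ∧ ∀ U ∈ A, IsOpen U ∧ U.Nonempty

/-- A valid response of Player II to the family `A`: a finite family of nonempty
open sets such that every member of `A` contains some member of `B`. -/
def IIMove (A B : Set (Set X)) : Prop :=
  IMove X B ∧ ∀ U ∈ A, ∃ V ∈ B, V ⊆ U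

/-- `X` is I-favorable: Player I has a winning strategy in the finite open-open
game. A strategy is a function from histories of Player II's moves to the next
move of Player I; it is winning if for every play in which Player II always
responds validly, each tail union of Player II's families is dense. -/
def IFavorable : Prop :=
  ∃ σ : List (Set (Set X)) → Set (Set X),
    (∀ hist, IMove X (σ hist)) ∧
    ∀ B : ℕ → Set (Set X),
      (∀ n, IIMove X (σ ((List.range n).map B)) (B n)) →
      ∀ k, Dense (⋃ (n : ℕ) (_ : k ≤ n), ⋃₀ B n)

/-- Player II has a winning strategy in the finite open-open game: a function
from histories of Player I's moves to responses of Player II which are valid,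
and such that whenever Player I plays validly, some tail union of Player II's
families fails to be dense. -/
def IIFavorable : Prop :=
  ∃ τ : List (Set (Set X)) → Set (Set X),
    ∀ A : ℕ → Set (Set X), (∀ n, IMove X (A n)) →
      (∀ n, IIMove X (A n) (τ ((List.range (n + 1)).map A))) ∧
      ∃ k, ¬ Dense (⋃ (n : ℕ) (_ : k ≤ n), ⋃₀ τ ((List.range (n + 1)).map A))

/-- `Q` is a π-base for `X`: a family of nonempty open sets such that every
nonempty open set contains a member of the family. -/
def IsPiBase (Q : Set (Set X)) : Prop :=
  (∀ U ∈ Q, IsOpen U ∧ U.Nonempty) ∧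
  ∀ V : Set X, IsOpen V → V.Nonempty → ∃ U ∈ Q, U ⊆ V

/-- `C` is a club filter with respect to the π-base `Q`. -/
def IsClubFilter (Q : Set (Set X)) (C : Set (Set (Set X))) : Prop :=
  (∀ P ∈ C, P.Countable ∧ P ⊆ Q) ∧
  (∀ P : ℕ → Set (Set X), (∀ n, P n ∈ C) → Monotone P → (⋃ n, P n) ∈ C) ∧
  (∀ A : Set (Set X), A.Countable → A ⊆ Q → ∃ P ∈ C, A ⊆ P) ∧
  (∀ V : Set X, IsOpen V → V.Nonempty →
    ∀ P ∈ C, ∃ W ∈ P, ∀ U ∈ P, U ⊆ W → (U ∩ V).Nonempty)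

/-- The hyperspace of nonempty closed subsets of `X`. -/
def Hyper (X : Type*) [TopologicalSpace X] : Type _ :=
  {A : Set X // IsClosed A ∧ A.Nonempty}

/-- The Vietoris basic open set `⟨V₁,…,Vₙ⟩` determined by a list of open sets:
all nonempty closed sets contained in the union and meeting each member. -/
def vietorisBasic {X : Type*} [TopologicalSpace X] (L : List (Set X)) :
    Set (Hyper X) :=
  {A | A.1 ⊆ ⋃₀ {V | V ∈ L} ∧ ∀ V ∈ L, (A.1 ∩ V).Nonempty}

/-- The Vietoris topology on the hyperspace, generated by the basic sets
`⟨V₁,…,Vₙ⟩` for nonempty finite lists of open sets. -/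
instance (X : Type*) [TopologicalSpace X] : TopologicalSpace (Hyper X) :=
  TopologicalSpace.generateFrom
    {S | ∃ L : List (Set X), L ≠ [] ∧ (∀ V ∈ L, IsOpen V) ∧ S = vietorisBasic L}

/- ================= auxiliary ================== -/
namespace HyperPf

variable {X}

open Classical in
/-- pick a point from a set -/
noncomputable def pick [Nonempty X] (V : Set X) : X :=
  if h : V.Nonempty then h.some else Classical.arbitrary X

lemma pick_mem [Nonempty X] {V : Set X} (h : V.Nonempty) : pick V ∈ V := by
  classical
  rw [pick]
  rw [dif_pos h]
  exact h.some_mem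

lemma mem_sU {L : List (Set X)} {x : X} : x ∈ ⋃₀ {V | V ∈ L} ↔ ∃ V ∈ L, x ∈ V := by
  simp [mem_sUnion]

/-- a finite nonempty subset of X as an element of Hyper X -/
noncomputable def finElt [T1Space X] (S : Set X) (hf : S.Finite) (hn : S.Nonempty) : Hyper X :=
  ⟨S, hf.isClosed, hn⟩

/-- picks of a list -/
noncomputable def picks [Nonempty X] (L : List (Set X)) : Set X := pick '' {V | V ∈ L}

lemma picks_finite [Nonempty X] (L : List (Set X)) : (picks L).Finite :=
  L.finite_toSet.image _

lemma picks_nonempty [Nonempty X] {L : List (Set X)} (h : L ≠ []) : (picks L).Nonempty := by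
  obtain ⟨V, hV⟩ := List.exists_mem_of_ne_nil L h
  exact ⟨pick V, ⟨V, hV, rfl⟩⟩

lemma picks_mem_basic [Nonempty X] [T1Space X] {L : List (Set X)}
    (hL : L ≠ []) (hne : ∀ V ∈ L, V.Nonempty) :
    finElt (picks L) (picks_finite L) (picks_nonempty hL) ∈ vietorisBasic L := by
  constructor
  · rintro x ⟨V, hV, rfl⟩
    exact mem_sU.2 ⟨V, hV, pick_mem (hne V hV)⟩
  · intro V hV
    exact ⟨pick V, ⟨⟨V, hV, rfl⟩, pick_mem (hne V hV)⟩⟩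

/-- nonempty basic sets -/
lemma basic_nonempty [Nonempty X] [T1Space X] {L : List (Set X)}
    (hL : L ≠ []) (hne : ∀ V ∈ L, V.Nonempty) : (vietorisBasic L).Nonempty :=
  ⟨_, picks_mem_basic hL hne⟩


section Char
variable [Nonempty X] [T1Space X]

/-- insert a point into the picks witness -/
lemma insert_mem_basic {L : List (Set X)} (hL : L ≠ []) (hne : ∀ V ∈ L, V.Nonempty)
    {x : X} (hx : x ∈ ⋃₀ {V | V ∈ L}) :
    (⟨insert x (picks L), ((picks_finite L).insert x).isClosed,
      insert_nonempty _ _⟩ : Hyper X) ∈ vietorisBasic L := by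
  obtain ⟨hsub, hmeet⟩ := picks_mem_basic hL hne
  constructor
  · intro y hy
    rcases hy with rfl | hy
    · exact hx
    · exact hsub hy
  · intro V hV
    obtain ⟨z, hz⟩ := hmeet V hV
    exact ⟨z, Or.inr hz.1, hz.2⟩

/-- subset characterization, direction used -/
lemma basic_subset_char {L M : List (Set X)} (hL : L ≠ []) (hneL : ∀ V ∈ L, V.Nonempty)
    (hsub : vietorisBasic L ⊆ vietorisBasic (X := X) M) :
    (⋃₀ {V | V ∈ L} ⊆ ⋃₀ {V | V ∈ M}) ∧ ∀ W ∈ M, ∃ V ∈ L, V ⊆ W := by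
  constructor
  · intro x hx
    have := hsub (insert_mem_basic hL hneL hx)
    exact this.1 (Or.inl rfl)
  · intro W hW
    by_contra hcon
    push_neg at hcon
    -- for each V ∈ L pick a point in V \ W
    classical
    have hne' : ∀ V ∈ L, (V \ W).Nonempty := by
      intro V hV
      rw [Set.sdiff_nonempty]
      exact hcon V hV
    -- the set of picks of the list  (L.map (· \ W))
    set L' := L.map (· \ W) with hL'
    have hL'ne : L' ≠ [] := by simpa [hL'] using hL
    have hne'' : ∀ V ∈ L', V.Nonempty := by
      intro V hV
      simp only [hL', List.mem_map] at hV
      obtain ⟨V0, hV0, rfl⟩ := hV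
      exact hne' V0 hV0
    -- picks L' is an element of vietorisBasic L
    have hmem : (finElt (picks L') (picks_finite L') (picks_nonempty hL'ne)) ∈
        vietorisBasic L := by
      constructor
      · rintro x ⟨V, hV, rfl⟩
        simp only [hL', Set.mem_setOf_eq, List.mem_map] at hV
        obtain ⟨V0, hV0, rfl⟩ := hV
        exact mem_sU.2 ⟨V0, hV0, (pick_mem (hne' V0 hV0)).1⟩
      · intro V hV
        have hV' : V \ W ∈ L' := by
          simp only [hL', List.mem_map]; exact ⟨V, hV, rfl⟩
        exact ⟨pick (V \ W), ⟨⟨V \ W, hV', rfl⟩, (pick_mem (hne' V hV)).1⟩⟩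
    have := (hsub hmem).2 W hW
    obtain ⟨z, hz1, hz2⟩ := this
    obtain ⟨V, hV, rfl⟩ := hz1
    simp only [hL', Set.mem_setOf_eq, List.mem_map] at hV
    obtain ⟨V0, hV0, rfl⟩ := hV
    exact (pick_mem (hne' V0 hV0)).2 hz2

/-- two basic sets meet if the cross conditions hold -/
lemma basic_meet {L M : List (Set X)} (hL : L ≠ []) (hM : M ≠ [])
    (h1 : ∀ V ∈ L, (V ∩ ⋃₀ {W | W ∈ M}).Nonempty)
    (h2 : ∀ W ∈ M, (W ∩ ⋃₀ {V | V ∈ L}).Nonempty) :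
    (vietorisBasic (X := X) L ∩ vietorisBasic M).Nonempty := by
  classical
  set L' := L.map (· ∩ ⋃₀ {W | W ∈ M}) with hL'
  set M' := M.map (· ∩ ⋃₀ {V | V ∈ L}) with hM'
  have hneL' : ∀ V ∈ L', V.Nonempty := by
    intro V hV; simp only [hL', List.mem_map] at hV
    obtain ⟨V0, hV0, rfl⟩ := hV; exact h1 V0 hV0
  have hneM' : ∀ V ∈ M', V.Nonempty := by
    intro V hV; simp only [hM', List.mem_map] at hV
    obtain ⟨V0, hV0, rfl⟩ := hV; exact h2 V0 hV0
  set S := picks L' ∪ picks M' with hS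
  have hSfin : S.Finite := (picks_finite L').union (picks_finite M')
  have hSne : S.Nonempty := by
    have := picks_nonempty (L := L') (by simpa [hL'] using hL)
    exact this.mono subset_union_left
  refine ⟨⟨S, hSfin.isClosed, hSne⟩, ?_, ?_⟩
  · constructor
    · rintro x (⟨V, hV, rfl⟩ | ⟨V, hV, rfl⟩)
      · simp only [hL', Set.mem_setOf_eq, List.mem_map] at hV
        obtain ⟨V0, hV0, rfl⟩ := hV
        exact mem_sU.2 ⟨V0, hV0, (pick_mem (h1 V0 hV0)).1⟩
      · simp only [hM', Set.mem_setOf_eq, List.mem_map] at hV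
        obtain ⟨V0, hV0, rfl⟩ := hV
        exact (pick_mem (h2 V0 hV0)).2
    · intro V hV
      have hV' : V ∩ ⋃₀ {W | W ∈ M} ∈ L' := by
        simp only [hL', List.mem_map]; exact ⟨V, hV, rfl⟩
      exact ⟨pick _, Or.inl ⟨_, hV', rfl⟩, (pick_mem (h1 V hV)).1⟩
  · constructor
    · rintro x (⟨V, hV, rfl⟩ | ⟨V, hV, rfl⟩)
      · simp only [hL', Set.mem_setOf_eq, List.mem_map] at hV
        obtain ⟨V0, hV0, rfl⟩ := hV
        exact (pick_mem (h1 V0 hV0)).2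
      · simp only [hM', Set.mem_setOf_eq, List.mem_map] at hV
        obtain ⟨V0, hV0, rfl⟩ := hV
        exact mem_sU.2 ⟨V0, hV0, (pick_mem (h2 V0 hV0)).1⟩
    · intro W hW
      have hW' : W ∩ ⋃₀ {V | V ∈ L} ∈ M' := by
        simp only [hM', List.mem_map]; exact ⟨W, hW, rfl⟩
      exact ⟨pick _, Or.inr ⟨_, hW', rfl⟩, (pick_mem (h2 W hW)).1⟩

end Char

/-- the family of nonempty Vietoris basic sets -/
def QExp (X : Type*) [TopologicalSpace X] : Set (Set (Hyper X)) :=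
  {S | ∃ L : List (Set X), L ≠ [] ∧ (∀ V ∈ L, IsOpen V ∧ V.Nonempty) ∧ S = vietorisBasic L}

section PiBase
variable [T1Space X]

lemma combine {L M : List (Set X)} (hL : L ≠ [])
    (hoL : ∀ V ∈ L, IsOpen V) (hoM : ∀ V ∈ M, IsOpen V)
    {A : Hyper X} (hAL : A ∈ vietorisBasic L) (hAM : A ∈ vietorisBasic M) :
    ∃ N : List (Set X), N ≠ [] ∧ (∀ V ∈ N, IsOpen V) ∧ A ∈ vietorisBasic N ∧
      vietorisBasic N ⊆ vietorisBasic L ∩ vietorisBasic M := by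
  classical
  refine ⟨L.map (· ∩ ⋃₀ {W | W ∈ M}) ++ M.map (· ∩ ⋃₀ {V | V ∈ L}), ?_, ?_, ?_, ?_⟩
  · simp [hL]
  · intro V hV
    rcases List.mem_append.1 hV with hV | hV <;> rw [List.mem_map] at hV <;>
      obtain ⟨V0, hV0, rfl⟩ := hV
    · exact (hoL V0 hV0).inter (isOpen_sUnion (by intro W hW; exact hoM W hW))
    · exact (hoM V0 hV0).inter (isOpen_sUnion (by intro W hW; exact hoL W hW))
  · constructor
    · intro x hx
      obtain ⟨V, hV, hxV⟩ := mem_sU.1 (hAL.1 hx)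
      refine mem_sU.2 ⟨V ∩ ⋃₀ {W | W ∈ M}, ?_, hxV, hAM.1 hx⟩
      exact List.mem_append.2 (Or.inl (List.mem_map.2 ⟨V, hV, rfl⟩))
    · intro V hV
      rcases List.mem_append.1 hV with hV | hV <;> rw [List.mem_map] at hV <;>
        obtain ⟨V0, hV0, rfl⟩ := hV
      · obtain ⟨z, hz1, hz2⟩ := hAL.2 V0 hV0
        exact ⟨z, hz1, hz2, hAM.1 hz1⟩
      · obtain ⟨z, hz1, hz2⟩ := hAM.2 V0 hV0
        exact ⟨z, hz1, hz2, hAL.1 hz1⟩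
  · intro B hB
    constructor
    · constructor
      · intro x hx
        obtain ⟨V, hV, hxV⟩ := mem_sU.1 (hB.1 hx)
        rcases List.mem_append.1 hV with hV | hV <;> rw [List.mem_map] at hV <;>
          obtain ⟨V0, hV0, rfl⟩ := hV
        · exact mem_sU.2 ⟨V0, hV0, hxV.1⟩
        · exact hxV.2
      · intro V hV
        obtain ⟨z, hz1, hz2⟩ := hB.2 (V ∩ ⋃₀ {W | W ∈ M})
          (List.mem_append.2 (Or.inl (List.mem_map.2 ⟨V, hV, rfl⟩)))
        exact ⟨z, hz1, hz2.1⟩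
    · constructor
      · intro x hx
        obtain ⟨V, hV, hxV⟩ := mem_sU.1 (hB.1 hx)
        rcases List.mem_append.1 hV with hV | hV <;> rw [List.mem_map] at hV <;>
          obtain ⟨V0, hV0, rfl⟩ := hV
        · exact hxV.2
        · exact mem_sU.2 ⟨V0, hV0, hxV.1⟩
      · intro W hW
        obtain ⟨z, hz1, hz2⟩ := hB.2 (W ∩ ⋃₀ {V | V ∈ L})
          (List.mem_append.2 (Or.inr (List.mem_map.2 ⟨W, hW, rfl⟩)))
        exact ⟨z, hz1, hz2.1⟩

lemma exists_basic_of_finiteInter {f : Set (Set (Hyper X))} (hf : f.Finite) :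
    f ⊆ {S | ∃ L : List (Set X), L ≠ [] ∧ (∀ V ∈ L, IsOpen V) ∧ S = vietorisBasic L} →
    ∀ A : Hyper X, A ∈ ⋂₀ f →
    ∃ N : List (Set X), N ≠ [] ∧ (∀ V ∈ N, IsOpen V) ∧ A ∈ vietorisBasic N ∧
      vietorisBasic N ⊆ ⋂₀ f := by
  refine Set.Finite.induction_on _ hf ?_ ?_
  · intro _ A _
    refine ⟨[univ], by simp, by simp, ⟨?_, ?_⟩, by simp⟩
    · intro x _; exact mem_sU.2 ⟨univ, by simp, trivial⟩
    · intro V hV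
      rw [List.mem_singleton] at hV
      subst hV
      simpa using A.2.2
  · intro a s _ _ IH hsub A hA
    obtain ⟨N, hN1, hN2, hN3, hN4⟩ := IH (fun x hx => hsub (Or.inr hx)) A
      (fun t ht => hA t (Or.inr ht))
    obtain ⟨L, hL1, hL2, rfl⟩ := hsub (mem_insert a s)
    have hAa : A ∈ vietorisBasic L := hA _ (mem_insert _ s)
    obtain ⟨N', h1, h2, h3, h4⟩ := combine hN1 hN2 hL2 hN3 hAa
    refine ⟨N', h1, h2, h3, ?_⟩
    intro B hB t ht
    rcases ht with rfl | ht
    · exact (h4 hB).2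
    · exact hN4 (h4 hB).1 t ht

lemma qexp_open {S : Set (Hyper X)} (hS : S ∈ QExp X) : IsOpen S := by
  obtain ⟨L, h1, h2, rfl⟩ := hS
  exact TopologicalSpace.isOpen_generateFrom_of_mem ⟨L, h1, fun V hV => (h2 V hV).1, rfl⟩

lemma qexp_piBase [Nonempty X] : IsPiBase (Hyper X) (QExp X) := by
  constructor
  · intro U hU
    refine ⟨qexp_open hU, ?_⟩
    obtain ⟨L, h1, h2, rfl⟩ := hU
    exact basic_nonempty h1 (fun V hV => (h2 V hV).2)
  · intro G hG hGne
    obtain ⟨A, hA⟩ := hGne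
    have hbasis := TopologicalSpace.isTopologicalBasis_of_subbasis
      (s := {S | ∃ L : List (Set X), L ≠ [] ∧ (∀ V ∈ L, IsOpen V) ∧ S = vietorisBasic L})
      (t := instTopologicalSpaceHyper X) rfl
    obtain ⟨v, hv, hAv, hvG⟩ := hbasis.exists_subset_of_mem_open hA hG
    obtain ⟨f, ⟨hffin, hfsub⟩, rfl⟩ := hv
    obtain ⟨N, h1, h2, h3, h4⟩ := exists_basic_of_finiteInter hffin hfsub A hAv
    refine ⟨vietorisBasic N, ⟨N, h1, ?_, rfl⟩, fun B hB => hvG (h4 hB)⟩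
    intro V hV
    exact ⟨h2 V hV, (h3.2 V hV).mono inter_subset_right |>.mono (by simp)⟩

end PiBase

section Easy
variable {Z : Type*} [TopologicalSpace Z]

lemma iFavorable_of_clubFilter (Q : Set (Set Z)) (C : Set (Set (Set Z)))
    (hQ : IsPiBase Z Q) (hC : IsClubFilter Z Q C) : IFavorable Z := by
  classical
  obtain ⟨hC1, hC2, hC3, hC4⟩ := hC
  obtain ⟨hQ1, hQ2⟩ := hQ
  rcases isEmpty_or_nonempty Z with hE | hNE
  · refine ⟨fun _ => ∅, fun _ => ⟨finite_empty, by simp⟩, ?_⟩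
    intro B hB k x
    exact (IsEmpty.false x).elim
  · -- a fixed element of Q
    obtain ⟨q₀, hq₀Q, -⟩ := hQ2 univ isOpen_univ univ_nonempty
    -- shrinking an open set into the π-base
    have hsh : ∀ O : Set Z, ∃ q, q ∈ Q ∧ (IsOpen O → O.Nonempty → q ⊆ O) := by
      intro O
      by_cases h : IsOpen O ∧ O.Nonempty
      · obtain ⟨q, hq1, hq2⟩ := hQ2 O h.1 h.2
        exact ⟨q, hq1, fun _ _ => hq2⟩
      · exact ⟨q₀, hq₀Q, fun h1 h2 => absurd ⟨h1, h2⟩ h⟩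
    choose shbase hshQ hshsub using hsh
    -- the shrink of a move
    have hshr : ∀ b : Set (Set Z), ∃ s : Set (Set Z), s ⊆ Q ∧ s.Countable ∧
        (b.Finite → ∀ O ∈ b, IsOpen O → O.Nonempty → shbase O ∈ s) := by
      intro b
      by_cases hb : b.Finite
      · refine ⟨shbase '' {O | O ∈ b ∧ IsOpen O ∧ O.Nonempty}, ?_, ?_, ?_⟩
        · rintro V ⟨O, -, rfl⟩; exact hshQ O
        · exact ((hb.subset (sep_subset _ _)).image _).countable
        · intro _ O hO h1 h2; exact ⟨O, ⟨hO, h1, h2⟩, rfl⟩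
      · exact ⟨∅, empty_subset _, countable_empty, fun h => absurd h hb⟩
    choose shrinkSet hshrinkQ hshrinkCt hshrinkMem using hshr
    -- the next step operator
    have hA0 : ∀ (P : Set (Set Z)) (b : Set (Set Z)),
        ∃ P', P' ∈ C ∧ (if P ∈ C then P else ∅) ∪ shrinkSet b ⊆ P' := by
      intro P b
      have hct : ((if P ∈ C then P else ∅) ∪ shrinkSet b).Countable := by
        refine Countable.union ?_ (hshrinkCt b)
        split
        · rename_i h; exact (hC1 P h).1
        · exact countable_empty
      have hsb : ((if P ∈ C then P else ∅) ∪ shrinkSet b) ⊆ Q := by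
        refine union_subset ?_ (hshrinkQ b)
        split
        · rename_i h; exact (hC1 P h).2
        · exact empty_subset _
      obtain ⟨P', h1, h2⟩ := hC3 _ hct hsb
      exact ⟨P', h1, h2⟩
    choose next hnextC hnextSub using hA0
    obtain ⟨P₀, hP₀C, -⟩ := hC3 ∅ countable_empty (empty_subset _)
    set Pof : List (Set (Set Z)) → Set (Set Z) := fun L => L.foldl next P₀ with hPof
    have hPofC : ∀ L, Pof L ∈ C := by
      have : ∀ (L : List (Set (Set Z))) (P), P ∈ C → L.foldl next P ∈ C := by
        intro L
        induction L with
        | nil => intro P hP; exact hP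
        | cons b L IH => intro P hP; exact IH (next P b) (hnextC P b)
      intro L; exact this L P₀ hP₀C
    have hPofQ : ∀ L, Pof L ⊆ Q := fun L => (hC1 _ (hPofC L)).2
    -- enumeration of countable members
    have henex : ∀ P : Set (Set Z), ∃ f : ℕ → Set Z,
        (P ∈ C → ∀ i, f i ∈ Q) ∧ (P ∈ C → P.Nonempty → P ⊆ range f) := by
      intro P
      by_cases h : P ∈ C ∧ P.Nonempty
      · obtain ⟨f, hf⟩ := (hC1 P h.1).1.exists_eq_range h.2
        refine ⟨f, fun _ i => (hC1 P h.1).2 ?_, fun _ _ => hf.le⟩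
        rw [hf]; exact mem_range_self i
      · refine ⟨fun _ => q₀, fun _ _ => hq₀Q, fun h1 h2 => absurd ⟨h1, h2⟩ h⟩
    choose enum henumQ henumSurj using henex
    -- the strategy
    set σ' : List (Set (Set Z)) → Set (Set Z) := fun L =>
      (fun p : ℕ × ℕ => enum (Pof (L.take p.1)) p.2) '' (Iic L.length ×ˢ Iic L.length)
      with hσ'
    refine ⟨σ', ?_, ?_⟩
    · intro L
      constructor
      · exact ((finite_Iic _).prod (finite_Iic _)).image _
      · rintro U ⟨⟨m, i⟩, -, rfl⟩
        exact hQ1 _ (henumQ (Pof (L.take m)) (hPofC _) i)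
    · intro B hB k
      rw [dense_iff_inter_open]
      intro V hV hVne
      -- histories and the chain
      set Hist : ℕ → List (Set (Set Z)) := fun n => (List.range n).map B with hHist
      have hlen : ∀ n, (Hist n).length = n := by intro n; simp [hHist]
      have htake : ∀ m n, m ≤ n → (Hist n).take m = Hist m := by
        intro m n hmn
        simp only [hHist, ← List.map_take, List.take_range, Nat.min_def]
        rw [if_pos hmn]
      have hsucc : ∀ n, Hist (n + 1) = Hist n ++ [B n] := by
        intro n; simp [hHist, List.range_succ]
      have hPofsucc : ∀ n, Pof (Hist (n + 1)) = next (Pof (Hist n)) (B n) := by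
        intro n; rw [hsucc n]; simp [hPof]
      have hmono : Monotone (fun n => Pof (Hist n)) := by
        apply monotone_nat_of_le_succ
        intro n
        rw [hPofsucc n]
        refine subset_trans ?_ (hnextSub (Pof (Hist n)) (B n))
        rw [if_pos (hPofC _)]
        exact subset_union_left
      have hPinf : (⋃ n, Pof (Hist n)) ∈ C := hC2 _ (fun n => hPofC _) hmono
      obtain ⟨W, hWP, hgood⟩ := hC4 V hV hVne _ hPinf
      obtain ⟨N, hWN⟩ := mem_iUnion.1 hWP
      have hWrange : W ∈ range (enum (Pof (Hist N))) :=
        henumSurj _ (hPofC _) ⟨W, hWN⟩ hWN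
      obtain ⟨j, hj⟩ := hWrange
      set n := k + N + j with hn
      have hkn : k ≤ n := by omega
      -- W is played at stage n
      have hWplayed : W ∈ σ' (Hist n) := by
        refine ⟨(N, j), ⟨?_, ?_⟩, ?_⟩
        · simp only [mem_Iic, hlen]; omega
        · simp only [mem_Iic, hlen]; omega
        · simp only [hlen]
          rw [htake N n (by omega)]
          exact hj
      obtain ⟨⟨hBmove, hBresp⟩⟩ := And.intro (hB n) trivial
      obtain ⟨V', hV'B, hV'W⟩ := hBresp W hWplayed
      have hV'open : IsOpen V' := (hBmove.2 V' hV'B).1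
      have hV'ne : V'.Nonempty := (hBmove.2 V' hV'B).2
      have hshmem : shbase V' ∈ shrinkSet (B n) :=
        hshrinkMem (B n) hBmove.1 V' hV'B hV'open hV'ne
      have hshinf : shbase V' ∈ ⋃ m, Pof (Hist m) := by
        refine mem_iUnion.2 ⟨n + 1, ?_⟩
        rw [hPofsucc n]
        exact hnextSub (Pof (Hist n)) (B n) (Or.inr hshmem)
      have hsub' : shbase V' ⊆ W := (hshsub V' hV'open hV'ne).trans hV'W
      obtain ⟨x, hx1, hx2⟩ := hgood _ hshinf hsub'
      refine ⟨x, hx2, ?_⟩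
      refine mem_iUnion.2 ⟨n, mem_iUnion.2 ⟨hkn, ?_⟩⟩
      exact ⟨V', hV'B, hshsub V' hV'open hV'ne hx1⟩

end Easy

/-- the π-base of all nonempty open sets -/
def QAll (Z : Type*) [TopologicalSpace Z] : Set (Set Z) := {U | IsOpen U ∧ U.Nonempty}

section Hard
variable {Z : Type*} [TopologicalSpace Z]

lemma countable_lists {α : Type*} {S : Set α} (hS : S.Countable) :
    {L : List α | ∀ x ∈ L, x ∈ S}.Countable := by
  have : Countable S := hS.to_subtype
  have hsurj : {L : List α | ∀ x ∈ L, x ∈ S} ⊆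
      range (fun l : List S => l.map Subtype.val) := by
    intro L hL
    induction L with
    | nil => exact ⟨[], rfl⟩
    | cons a L IH =>
      obtain ⟨l, hl⟩ := IH (fun x hx => hL x (List.mem_cons_of_mem a hx))
      exact ⟨⟨a, hL a (List.mem_cons_self (a := a) (l := L))⟩ :: l, by simp [hl]⟩
  exact (countable_range _).mono hsurj

lemma finite_subset_mono {α : Type*} {P : ℕ → Set α} (hm : Monotone P) {s : Set α}
    (hs : s.Finite) : s ⊆ ⋃ n, P n → ∃ n, s ⊆ P n := by
  refine Set.Finite.induction_on _ hs ?_ ?_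
  · intro _; exact ⟨0, empty_subset _⟩
  · intro a t _ _ IH hsub
    obtain ⟨n1, hn1⟩ := IH (fun x hx => hsub (Or.inr hx))
    obtain ⟨n2, hn2⟩ := mem_iUnion.1 (hsub (mem_insert a t))
    refine ⟨max n1 n2, ?_⟩
    rintro x (rfl | hx)
    · exact hm (le_max_right n1 n2) hn2
    · exact hm (le_max_left n1 n2) (hn1 hx)

lemma list_subset_mono {β : Type*} {P : ℕ → Set β} (hm : Monotone P)
    (L : List (Set β)) (hL : ∀ s ∈ L, s ⊆ ⋃ n, P n ∧ s.Finite) :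
    ∃ N, ∀ s ∈ L, s ⊆ P N ∧ s.Finite := by
  induction L with
  | nil => exact ⟨0, by simp⟩
  | cons a L IH =>
    obtain ⟨N1, hN1⟩ := IH (fun s hs => hL s (List.mem_cons_of_mem a hs))
    obtain ⟨h1, h2⟩ := hL a (List.mem_cons_self (a := a) (l := L))
    obtain ⟨N2, hN2⟩ := finite_subset_mono hm h2 h1
    refine ⟨max N1 N2, ?_⟩
    intro s hs
    rcases List.mem_cons.1 hs with rfl | hs
    · exact ⟨hN2.trans (hm (le_max_right N1 N2)), h2⟩
    · exact ⟨(hN1 s hs).1.trans (hm (le_max_left N1 N2)), (hN1 s hs).2⟩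

/-- From a winning strategy we get an enriched club filter w.r.t. all nonempty
open sets: closed also under nonempty finite intersections. -/
lemma clubOf_iFavorable (h : IFavorable Z) :
    ∃ C : Set (Set (Set Z)),
      (∀ P ∈ C, P.Countable ∧ P ⊆ QAll Z) ∧
      (∀ P : ℕ → Set (Set Z), (∀ n, P n ∈ C) → Monotone P → (⋃ n, P n) ∈ C) ∧
      (∀ A : Set (Set Z), A.Countable → A ⊆ QAll Z → ∃ P ∈ C, A ⊆ P) ∧
      (∀ P ∈ C, ∀ U V : Set Z, U ∈ P → V ∈ P → (U ∩ V).Nonempty → U ∩ V ∈ P) ∧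
      (∀ V : Set Z, IsOpen V → V.Nonempty →
        ∀ P ∈ C, ∃ W ∈ P, ∀ U ∈ P, U ⊆ W → (U ∩ V).Nonempty) := by
  classical
  obtain ⟨σ, hσmove, hσwin⟩ := h
  set C : Set (Set (Set Z)) := {P | P.Countable ∧ P ⊆ QAll Z ∧
      (∀ L : List (Set (Set Z)), (∀ s ∈ L, s ⊆ P ∧ s.Finite) → σ L ⊆ P) ∧
      (∀ U V : Set Z, U ∈ P → V ∈ P → (U ∩ V).Nonempty → U ∩ V ∈ P)} with hCdef
  have hC1 : ∀ P ∈ C, P.Countable ∧ P ⊆ QAll Z := fun P hP => ⟨hP.1, hP.2.1⟩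
  have hC2 : ∀ P : ℕ → Set (Set Z), (∀ n, P n ∈ C) → Monotone P → (⋃ n, P n) ∈ C := by
    intro P hP hm
    refine ⟨countable_iUnion (fun n => (hP n).1), iUnion_subset (fun n => (hP n).2.1), ?_, ?_⟩
    · intro L hL
      obtain ⟨N, hN⟩ := list_subset_mono hm L hL
      exact ((hP N).2.2.1 L hN).trans (subset_iUnion _ N)
    · intro U V hU hV hne
      obtain ⟨n1, hn1⟩ := mem_iUnion.1 hU
      obtain ⟨n2, hn2⟩ := mem_iUnion.1 hV
      refine mem_iUnion.2 ⟨max n1 n2, (hP _).2.2.2 U V ?_ ?_ hne⟩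
      · exact hm (le_max_left n1 n2) hn1
      · exact hm (le_max_right n1 n2) hn2
  have hC3 : ∀ A : Set (Set Z), A.Countable → A ⊆ QAll Z → ∃ P ∈ C, A ⊆ P := by
    intro A hactble hAQ
    set F : Set (Set Z) → Set (Set Z) := fun P =>
      P ∪ (⋃ L ∈ {L : List (Set (Set Z)) | ∀ s ∈ L, s ⊆ P ∧ s.Finite}, σ L) ∪
        {W | ∃ U ∈ P, ∃ V ∈ P, (U ∩ V).Nonempty ∧ W = U ∩ V} with hF
    have hFsup : ∀ P, P ⊆ F P := fun P => subset_union_left.trans subset_union_left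
    have hFctble : ∀ P : Set (Set Z), P.Countable → (F P).Countable := by
      intro P hP
      refine (Countable.union (Countable.union hP ?_) ?_)
      · refine Countable.biUnion ?_ (fun L _ => ((hσmove L).1).countable)
        have : {L : List (Set (Set Z)) | ∀ s ∈ L, s ⊆ P ∧ s.Finite} ⊆
            {L : List (Set (Set Z)) | ∀ x ∈ L, x ∈ {s : Set (Set Z) | s.Finite ∧ s ⊆ P}} := by
          intro L hL x hx; exact ⟨(hL x hx).2, (hL x hx).1⟩
        exact (countable_lists (Set.countable_setOf_finite_subset hP)).mono this
      · have : {W | ∃ U ∈ P, ∃ V ∈ P, (U ∩ V).Nonempty ∧ W = U ∩ V} ⊆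
            image2 (· ∩ ·) P P := by
          rintro W ⟨U, hU, V, hV, -, rfl⟩; exact ⟨U, hU, V, hV, rfl⟩
        exact (hP.image2 hP _).mono this
    have hFQ : ∀ P : Set (Set Z), P ⊆ QAll Z → F P ⊆ QAll Z := by
      intro P hP W hW
      rcases hW with (hW | hW) | hW
      · exact hP hW
      · simp only [mem_iUnion] at hW
        obtain ⟨L, hL, hWL⟩ := hW
        exact (hσmove L).2 W hWL
      · obtain ⟨U, hU, V, hV, hne, rfl⟩ := hW
        exact ⟨(hP hU).1.inter (hP hV).1, hne⟩
    set g : ℕ → Set (Set Z) := fun n => F^[n] A with hg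
    have hgsucc : ∀ n, g (n + 1) = F (g n) := by
      intro n; simp only [hg, Function.iterate_succ_apply']
    have hgmono : Monotone g := by
      apply monotone_nat_of_le_succ
      intro n; rw [hgsucc]; exact hFsup _
    have hgct : ∀ n, (g n).Countable := by
      intro n; induction n with
      | zero => exact hactble
      | succ n IH => rw [hgsucc]; exact hFctble _ IH
    have hgQ : ∀ n, g n ⊆ QAll Z := by
      intro n; induction n with
      | zero => exact hAQ
      | succ n IH => rw [hgsucc]; exact hFQ _ IH
    refine ⟨⋃ n, g n, ⟨countable_iUnion hgct, iUnion_subset hgQ, ?_, ?_⟩, ?_⟩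
    · intro L hL
      obtain ⟨N, hN⟩ := list_subset_mono hgmono L hL
      have hstep : σ L ⊆ F (g N) := by
        refine subset_trans ?_ subset_union_left
        refine subset_trans ?_ subset_union_right
        exact subset_biUnion_of_mem (u := fun L' => σ L') hN
      rw [← hgsucc] at hstep
      exact hstep.trans (subset_iUnion g (N + 1))
    · intro U V hU hV hne
      obtain ⟨n1, hn1⟩ := mem_iUnion.1 hU
      obtain ⟨n2, hn2⟩ := mem_iUnion.1 hV
      have hstep : U ∩ V ∈ F (g (max n1 n2)) := by
        refine Or.inr ⟨U, hgmono (le_max_left n1 n2) hn1,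
          V, hgmono (le_max_right n1 n2) hn2, hne, rfl⟩
      rw [← hgsucc] at hstep
      exact mem_iUnion.2 ⟨max n1 n2 + 1, hstep⟩
    · exact subset_iUnion g 0
  have hC4 : ∀ V : Set Z, IsOpen V → V.Nonempty →
      ∀ P ∈ C, ∃ W ∈ P, ∀ U ∈ P, U ⊆ W → (U ∩ V).Nonempty := by
    intro V hVo hVne P hP
    by_contra hcon
    push_neg at hcon
    -- a choice of a bad shrinking
    have hu : ∀ W : Set Z, ∃ U : Set Z, W ∈ P → U ∈ P ∧ U ⊆ W ∧ U ∩ V = ∅ := by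
      intro W
      by_cases hW : W ∈ P
      · obtain ⟨U, hU1, hU2, hU3⟩ := hcon W hW
        exact ⟨U, fun _ => ⟨hU1, hU2, hU3⟩⟩
      · exact ⟨∅, fun hW' => absurd hW' hW⟩
    choose u huspec using hu
    -- Player II's play
    set hist : ℕ → List (Set (Set Z)) := fun n =>
      Nat.rec [] (fun _ ih => ih ++ [u '' σ ih]) n with hhist
    set B : ℕ → Set (Set Z) := fun n => u '' σ (hist n) with hBdef
    have hhistsucc : ∀ n, hist (n + 1) = hist n ++ [B n] := fun n => rfl
    have hentries : ∀ n, ∀ s ∈ hist n, s ⊆ P ∧ s.Finite := by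
      intro n
      induction n with
      | zero => simp [hhist]
      | succ n IH =>
        rw [hhistsucc n]
        intro s hs
        rcases List.mem_append.1 hs with hs | hs
        · exact IH s hs
        · rw [List.mem_singleton] at hs
          subst hs
          have hσP : σ (hist n) ⊆ P := hP.2.2.1 (hist n) IH
          constructor
          · rintro x ⟨W, hW, rfl⟩
            exact (huspec W (hσP hW)).1
          · exact ((hσmove (hist n)).1).image u
    have hσP : ∀ n, σ (hist n) ⊆ P := fun n => hP.2.2.1 (hist n) (hentries n)
    have hrange : ∀ n, (List.range n).map B = hist n := by
      intro n
      induction n with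
      | zero => simp [hhist]
      | succ n IH => rw [List.range_succ, List.map_append, IH, hhistsucc n]; simp
    have hII : ∀ n, IIMove Z (σ ((List.range n).map B)) (B n) := by
      intro n
      rw [hrange n]
      refine ⟨⟨((hσmove (hist n)).1).image u, ?_⟩, ?_⟩
      · rintro U ⟨W, hW, rfl⟩
        have := (huspec W (hσP n hW)).1
        exact ⟨(hP.2.1 this).1, (hP.2.1 this).2⟩
      · intro U hU
        exact ⟨u U, ⟨U, hU, rfl⟩, (huspec U (hσP n hU)).2.1⟩
    have hdense := hσwin B hII 0
    obtain ⟨x, hx1, hx2⟩ := dense_iff_inter_open.1 hdense V hVo hVne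
    simp only [mem_iUnion] at hx2
    obtain ⟨n, -, T, hT, hxT⟩ := hx2
    obtain ⟨W, hW, rfl⟩ := hT
    have : x ∈ u W ∩ V := ⟨hxT, hx1⟩
    rw [(huspec W (hσP n hW)).2.2] at this
    exact this
  exact ⟨C, hC1, hC2, hC3, fun P hP => hP.2.2.2, hC4⟩
end Hard

section Transfer

/-- basic Vietoris sets with entries from `P` -/
def EP (P : Set (Set X)) : Set (Set (Hyper X)) :=
  {S | ∃ L : List (Set X), L ≠ [] ∧ (∀ V ∈ L, V ∈ P) ∧ S = vietorisBasic L}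

lemma EP_mono {P P' : Set (Set X)} (h : P ⊆ P') : EP P ⊆ EP P' := by
  rintro S ⟨L, h1, h2, rfl⟩
  exact ⟨L, h1, fun V hV => h (h2 V hV), rfl⟩

lemma EP_countable {P : Set (Set X)} (hP : P.Countable) : (EP P).Countable := by
  have : EP P ⊆ vietorisBasic '' {L : List (Set X) | ∀ x ∈ L, x ∈ P} := by
    rintro S ⟨L, h1, h2, rfl⟩
    exact ⟨L, h2, rfl⟩
  exact ((countable_lists hP).image _).mono this

lemma EP_subset_QExp {P : Set (Set X)} (hP : P ⊆ QAll X) : EP P ⊆ QExp X := by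
  rintro S ⟨L, h1, h2, rfl⟩
  exact ⟨L, h1, fun V hV => hP (h2 V hV), rfl⟩

lemma list_mem_mono {β : Type*} {P : ℕ → Set β} (hm : Monotone P) (L : List β)
    (h : ∀ x ∈ L, x ∈ ⋃ n, P n) : ∃ N, ∀ x ∈ L, x ∈ P N := by
  induction L with
  | nil => exact ⟨0, by simp⟩
  | cons a L IH =>
    obtain ⟨N1, hN1⟩ := IH (fun x hx => h x (List.mem_cons_of_mem a hx))
    obtain ⟨N2, hN2⟩ := mem_iUnion.1 (h a (List.mem_cons_self (a := a) (l := L)))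
    refine ⟨max N1 N2, ?_⟩
    intro x hx
    rcases List.mem_cons.1 hx with rfl | hx
    · exact hm (le_max_right N1 N2) hN2
    · exact hm (le_max_left N1 N2) (hN1 x hx)

variable [T1Space X]

/-- `EP` reflects inclusions -/
lemma EP_reflect {P P' : Set (Set X)} (hP : P ⊆ QAll X) (hP' : P' ⊆ QAll X)
    (hsub : EP P ⊆ EP P') : P ⊆ P' := by
  intro V hV
  have hVQ := hP hV
  obtain ⟨L, hL1, hL2, hLe⟩ := hsub ⟨[V], by simp, by simpa using hV, rfl⟩
  -- vietorisBasic [V] = {A | A.1 ⊆ V}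
  have hVB : ∀ A : Hyper X, A ∈ vietorisBasic [V] ↔ A.1 ⊆ V := by
    intro A
    constructor
    · intro hA
      intro x hx
      obtain ⟨W, hW, hxW⟩ := mem_sU.1 (hA.1 hx)
      rw [List.mem_singleton] at hW
      subst hW; exact hxW
    · intro hA
      constructor
      · intro x hx; exact mem_sU.2 ⟨V, List.mem_singleton_self V, hA hx⟩
      · intro W hW
        rw [List.mem_singleton] at hW
        subst hW
        obtain ⟨x, hx⟩ := A.2.2
        exact ⟨x, hx, hA hx⟩
  -- singletons
  have hsingle : ∀ x : X, (⟨{x}, (finite_singleton x).isClosed, singleton_nonempty x⟩ :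
      Hyper X) ∈ vietorisBasic L ↔ ∀ W ∈ L, x ∈ W := by
    intro x
    constructor
    · intro hA W hW
      obtain ⟨y, hy1, hy2⟩ := hA.2 W hW
      rw [mem_singleton_iff] at hy1; subst hy1; exact hy2
    · intro hx
      obtain ⟨W0, hW0⟩ := List.exists_mem_of_ne_nil L hL1
      constructor
      · intro y hy
        rw [mem_singleton_iff] at hy; subst hy
        exact mem_sU.2 ⟨W0, hW0, hx W0 hW0⟩
      · intro W hW
        exact ⟨x, rfl, hx W hW⟩
  -- V is contained in every entry of L
  have hα : ∀ x ∈ V, ∀ W ∈ L, x ∈ W := by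
    intro x hx
    have : (⟨{x}, (finite_singleton x).isClosed, singleton_nonempty x⟩ : Hyper X) ∈
        vietorisBasic L := by
      rw [← hLe]; apply (hVB _).2
      intro y hy; rw [mem_singleton_iff] at hy; subst hy; exact hx
    exact (hsingle x).1 this
  -- every entry of L is contained in V
  have hβ : ∀ W ∈ L, W ⊆ V := by
    intro W hW x hx
    obtain ⟨y, hy⟩ := hVQ.2
    have hpair : ({x, y} : Set X).Finite := (finite_singleton y).insert x
    have hmem : (⟨{x, y}, hpair.isClosed, insert_nonempty x {y}⟩ : Hyper X) ∈
        vietorisBasic L := by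
      constructor
      · rintro z (rfl | hz)
        · exact mem_sU.2 ⟨W, hW, hx⟩
        · rw [mem_singleton_iff] at hz; rw [hz]
          exact mem_sU.2 ⟨W, hW, hα y hy W hW⟩
      · intro W' hW'
        exact ⟨y, Or.inr rfl, hα y hy W' hW'⟩
    rw [← hLe] at hmem
    exact (hVB _).1 hmem (Or.inl rfl)
  obtain ⟨W0, hW0⟩ := List.exists_mem_of_ne_nil L hL1
  have : W0 = V := Subset.antisymm (hβ W0 hW0) (fun x hx => hα x hx W0 hW0)
  rw [← this]; exact hL2 W0 hW0


/-- transfer of the club-filter goodness property to the hyperspace -/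
lemma EP_good [Nonempty X] (P : Set (Set X)) (hPQ : P ⊆ QAll X)
    (hPint : ∀ U V : Set X, U ∈ P → V ∈ P → (U ∩ V).Nonempty → U ∩ V ∈ P)
    (hPgood : ∀ V : Set X, IsOpen V → V.Nonempty →
      ∃ W ∈ P, ∀ U ∈ P, U ⊆ W → (U ∩ V).Nonempty) :
    ∀ 𝒱 : Set (Hyper X), IsOpen 𝒱 → 𝒱.Nonempty →
      ∃ 𝒲 ∈ EP P, ∀ 𝒰 ∈ EP P, 𝒰 ⊆ 𝒲 → (𝒰 ∩ 𝒱).Nonempty := by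
  classical
  intro 𝒱 h𝒱o h𝒱ne
  obtain ⟨S, hSQ, hS𝒱⟩ := (qexp_piBase (X := X)).2 𝒱 h𝒱o h𝒱ne
  obtain ⟨W, hW1, hW2, rfl⟩ := hSQ
  -- choose a good element for each entry of W
  have hg : ∀ w : Set X, ∃ gw : Set X, (IsOpen w ∧ w.Nonempty) →
      (gw ∈ P ∧ ∀ U ∈ P, U ⊆ gw → (U ∩ w).Nonempty) := by
    intro w
    by_cases hw : IsOpen w ∧ w.Nonempty
    · obtain ⟨gw, h1, h2⟩ := hPgood w hw.1 hw.2
      exact ⟨gw, fun _ => ⟨h1, h2⟩⟩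
    · exact ⟨∅, fun hw' => absurd hw' hw⟩
  choose g hgspec using hg
  set M := W.map g with hM
  have hM1 : M ≠ [] := by simpa [hM] using hW1
  have hM2 : ∀ V ∈ M, V ∈ P := by
    intro V hV
    rw [hM, List.mem_map] at hV
    obtain ⟨w, hw, rfl⟩ := hV
    exact (hgspec w (hW2 w hw)).1
  refine ⟨vietorisBasic M, ⟨M, hM1, hM2, rfl⟩, ?_⟩
  rintro 𝒰 ⟨U, hU1, hU2, rfl⟩ hsub
  have hUne : ∀ u ∈ U, u.Nonempty := fun u hu => (hPQ (hU2 u hu)).2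
  obtain ⟨ha, hb⟩ := basic_subset_char hU1 hUne hsub
  -- the two meeting conditions
  have h1 : ∀ u ∈ U, (u ∩ ⋃₀ {w | w ∈ W}).Nonempty := by
    intro u hu
    obtain ⟨x, hx⟩ := hUne u hu
    obtain ⟨m, hm, hxm⟩ := mem_sU.1 (ha (mem_sU.2 ⟨u, hu, hx⟩))
    rw [hM, List.mem_map] at hm
    obtain ⟨w, hw, rfl⟩ := hm
    have hum : u ∩ g w ∈ P := hPint u (g w) (hU2 u hu) ((hgspec w (hW2 w hw)).1) ⟨x, hx, hxm⟩
    obtain ⟨y, hy1, hy2⟩ := (hgspec w (hW2 w hw)).2 (u ∩ g w) hum inter_subset_right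
    exact ⟨y, hy1.1, mem_sU.2 ⟨w, hw, hy2⟩⟩
  have h2 : ∀ w ∈ W, (w ∩ ⋃₀ {u | u ∈ U}).Nonempty := by
    intro w hw
    have hgwM : g w ∈ M := by rw [hM, List.mem_map]; exact ⟨w, hw, rfl⟩
    obtain ⟨u, hu, husub⟩ := hb (g w) hgwM
    obtain ⟨y, hy1, hy2⟩ := (hgspec w (hW2 w hw)).2 u (hU2 u hu) husub
    exact ⟨y, hy2, mem_sU.2 ⟨u, hu, hy1⟩⟩
  obtain ⟨A, hA1, hA2⟩ := basic_meet hU1 hW1 h1 h2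
  exact ⟨A, hA1, hS𝒱 hA2⟩

end Transfer
end HyperPf

/-- If a compact Hausdorff space is I-favorable, then its hyperspace of
nonempty closed sets with the Vietoris topology is I-favorable. -/
theorem hyper_iFavorable (X : Type*) [TopologicalSpace X] [CompactSpace X]
    [T2Space X] (h : IFavorable X) : IFavorable (Hyper X) := by
  classical
  rcases isEmpty_or_nonempty X with hE | hNE
  · haveI : IsEmpty (Hyper X) := by
      refine ⟨fun A => ?_⟩
      obtain ⟨x, -⟩ := A.2.2
      exact IsEmpty.false x
    refine ⟨fun _ => ∅, fun _ => ⟨Set.finite_empty, by simp⟩, ?_⟩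
    intro B hB k A
    exact (IsEmpty.false A).elim
  · obtain ⟨C, hC1, hC2, hC3, hCint, hC4⟩ := HyperPf.clubOf_iFavorable h
    set Cexp : Set (Set (Set (Hyper X))) := {S | ∃ P ∈ C, S = HyperPf.EP P} with hCexp
    refine HyperPf.iFavorable_of_clubFilter (HyperPf.QExp X) Cexp
      (HyperPf.qexp_piBase) ⟨?_, ?_, ?_, ?_⟩
    · rintro Pe ⟨P, hP, rfl⟩
      exact ⟨HyperPf.EP_countable (hC1 P hP).1, HyperPf.EP_subset_QExp (hC1 P hP).2⟩
    · intro 𝒬 h𝒬 hmono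
      have hch : ∀ n, ∃ P, P ∈ C ∧ 𝒬 n = HyperPf.EP P := by
        intro n; obtain ⟨P, hP, hPe⟩ := h𝒬 n; exact ⟨P, hP, hPe⟩
      choose Pn hPnC hPne using hch
      have hPmono : Monotone Pn := by
        intro m n hmn
        refine HyperPf.EP_reflect (hC1 _ (hPnC m)).2 (hC1 _ (hPnC n)).2 ?_
        rw [← hPne m, ← hPne n]
        exact hmono hmn
      have hPU : (⋃ n, Pn n) ∈ C := hC2 Pn hPnC hPmono
      refine ⟨⋃ n, Pn n, hPU, ?_⟩
      apply Subset.antisymm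
      · refine iUnion_subset (fun n => ?_)
        rw [hPne n]
        exact HyperPf.EP_mono (subset_iUnion Pn n)
      · rintro S ⟨L, hL1, hL2, rfl⟩
        obtain ⟨N, hN⟩ := HyperPf.list_mem_mono hPmono L hL2
        refine mem_iUnion.2 ⟨N, ?_⟩
        rw [hPne N]
        exact ⟨L, hL1, hN, rfl⟩
    · intro A hA hAQ
      have hrep : ∀ S : Set (Hyper X), ∃ L : List (Set X), S ∈ A →
          (L ≠ [] ∧ (∀ V ∈ L, IsOpen V ∧ V.Nonempty) ∧ S = vietorisBasic L) := by
        intro S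
        by_cases hS : S ∈ A
        · obtain ⟨L, h1, h2, h3⟩ := hAQ hS
          exact ⟨L, fun _ => ⟨h1, h2, h3⟩⟩
        · exact ⟨[], fun hS' => absurd hS' hS⟩
      choose rep hrep using hrep
      have hent : (⋃ S ∈ A, {V | V ∈ rep S}).Countable :=
        hA.biUnion (fun S _ => (rep S).finite_toSet.countable)
      have hentQ : (⋃ S ∈ A, {V | V ∈ rep S}) ⊆ HyperPf.QAll X := by
        intro V hV
        simp only [mem_iUnion] at hV
        obtain ⟨S, hS, hVS⟩ := hV
        exact (hrep S hS).2.1 V hVS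
      obtain ⟨P, hPC, hPsup⟩ := hC3 _ hent hentQ
      refine ⟨HyperPf.EP P, ⟨P, hPC, rfl⟩, ?_⟩
      intro S hS
      refine ⟨rep S, (hrep S hS).1, ?_, (hrep S hS).2.2⟩
      intro V hV
      exact hPsup (mem_iUnion.2 ⟨S, mem_iUnion.2 ⟨hS, hV⟩⟩)
    · rintro 𝒱 h𝒱o h𝒱ne Pe ⟨P, hP, rfl⟩
      exact HyperPf.EP_good P (hC1 P hP).2 (hCint P hP)
        (fun V h1 h2 => hC4 V h1 h2 P hP) 𝒱 h𝒱o h𝒱ne
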